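/- In the exterior algebra setting of the Orlik-Solomon algebra: for a matroid M on [n] and χ(I^σ) = sgn(σ) for independent I (and 0 for dependent sets), the boundary map ∂e_X = Σ_p (-1)^p χ(X \ i_p) e_{X \ i_p} satisfies, for any unidependent set U and any unidependent subset U' ⊆ U, the identity ∂e_U = ε · (∂e_{U'}) e_{U\U'} for some sign ε ∈ {±1}. -/

import Mathlib

open scoped BigOperators
open scoped Matroid

/-- A circuit: a minimal dependent set. -/
def IsCircuit {n : ℕ} (M : Matroid (Fin n)) (C : Finset (Fin n)) : Prop :=
  M.Dep ↑C ∧ ∀ D : Finset (Fin n), D ⊂ C → ¬ M.Dep ↑D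

/-- A broken circuit: a circuit (of size > 1) with its minimum removed. -/
def IsBrokenCircuit {n : ℕ} (M : Matroid (Fin n)) (B : Finset (Fin n)) : Prop :=
  ∃ (C : Finset (Fin n)) (a : Fin n), IsCircuit M C ∧ 1 < C.card ∧ a ∈ C ∧
    (∀ b ∈ C, a ≤ b) ∧ B = C.erase a

/-- A no-broken-circuit set. -/
def NBCSet {n : ℕ} (M : Matroid (Fin n)) (I : Finset (Fin n)) : Prop :=
  M.Indep ↑I ∧ ∀ B ⊆ I, ¬ IsBrokenCircuit M B

/-- A unidependent set: contains exactly one circuit. -/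
def Unidep {n : ℕ} (M : Matroid (Fin n)) (U : Finset (Fin n)) : Prop :=
  ↑U ⊆ M.E ∧ ∃! C : Finset (Fin n), C ⊆ U ∧ IsCircuit M C

/-- x is a loop. -/
def IsLoopM {n : ℕ} (M : Matroid (Fin n)) (x : Fin n) : Prop := M.Dep {x}

/-- Deletion of a single element. -/
noncomputable def mdel {n : ℕ} (M : Matroid (Fin n)) (x : Fin n) : Matroid (Fin n) :=
  M ↾ (M.E \ {x})

/-- Contraction of a single element, via duality. -/
noncomputable def mcon {n : ℕ} (M : Matroid (Fin n)) (x : Fin n) : Matroid (Fin n) :=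
  (M✶ ↾ (M.E \ {x}))✶

open scoped Classical in
/-- The rank of a finite set: maximal cardinality of an independent subset. -/
noncomputable def rkFin {n : ℕ} (M : Matroid (Fin n)) (U : Finset (Fin n)) : ℕ :=
  (U.powerset.filter fun I : Finset (Fin n) => M.Indep (↑I : Set (Fin n))).sup Finset.card

/-- A simple matroid with ground set everything. -/
def SimpleGround {n : ℕ} (M : Matroid (Fin n)) : Prop :=
  M.E = Set.univ ∧ (∀ i : Fin n, M.Indep {i}) ∧
    ∀ i j : Fin n, i ≠ j → M.Indep {i, j}

/-- Number of inversions of a list. -/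
def listInv {n : ℕ} : List (Fin n) → ℕ
  | [] => 0
  | a :: t => (t.countP fun b => decide (b < a)) + listInv t

/-- χ evaluated on an ordered set, with the sign convention χ(X^σ) = sgn(σ) χ(X). -/
def ochi {n : ℕ} {K : Type*} [Field K] (χ : Finset (Fin n) → K) (l : List (Fin n)) : K :=
  (-1 : K) ^ listInv l * χ l.toFinset

/-- The flag of flats associated to an ordered set: closures of its suffixes. -/
def flagOf {n : ℕ} (M : Matroid (Fin n)) (l : List (Fin n)) : List (Set (Fin n)) :=
  l.tails.map fun t => M.closure ↑t.toFinset

/-- An element `b` is active in `I`: it lies in `cl(I) \ I` and is the minimum of the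
(unique) circuit contained in `I ∪ {b}`. -/
def ActiveIn {n : ℕ} (M : Matroid (Fin n)) (I : Finset (Fin n)) (b : Fin n) : Prop :=
  b ∈ M.closure ↑I ∧ b ∉ I ∧
    ∃ C : Finset (Fin n), C ⊆ insert b I ∧ IsCircuit M C ∧ ∀ c ∈ C, b ≤ c


/-- An inactive unidependent set: `min C(U)` is the minimal active element of
`U \\ min C(U)`. -/
def InactiveUnidep {n : ℕ} (M : Matroid (Fin n)) (U : Finset (Fin n)) : Prop :=
  Unidep M U ∧ ∃ (C : Finset (Fin n)) (a : Fin n), C ⊆ U ∧ IsCircuit M C ∧ a ∈ C ∧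
    (∀ b ∈ C, a ≤ b) ∧ ∀ b : Fin n, ActiveIn M (U.erase a) b → a ≤ b

section Alg

variable {n : ℕ} {K : Type*} [Field K]

/-- The defining relations of the graded algebra `E`: squares of generators vanish and
generators commute up to the nonzero scalars `β i j` (for `i < j`). -/
inductive ERel (n : ℕ) (K : Type*) [Field K] (β : Fin n → Fin n → K) :
    FreeAlgebra K (Fin n) → FreeAlgebra K (Fin n) → Prop
  | sq (i : Fin n) : ERel n K β (FreeAlgebra.ι K i * FreeAlgebra.ι K i) 0
  | comm {i j : Fin n} (h : i < j) :
      ERel n K β (FreeAlgebra.ι K j * FreeAlgebra.ι K i)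
        (β i j • (FreeAlgebra.ι K i * FreeAlgebra.ι K j))

/-- The algebra `E` generated by `e_1, …, e_n` with `e_i² = 0`, `e_j e_i = β i j • e_i e_j`. -/
abbrev EAlg (n : ℕ) (K : Type*) [Field K] (β : Fin n → Fin n → K) := RingQuot (ERel n K β)

/-- The generator `e_i` of `E`. -/
noncomputable def gen (β : Fin n → Fin n → K) (i : Fin n) : EAlg n K β :=
  RingQuot.mkAlgHom K (ERel n K β) (FreeAlgebra.ι K i)

/-- `e_X`: the product of the generators indexed by `X`, in increasing order. -/
noncomputable def eset (β : Fin n → Fin n → K) (X : Finset (Fin n)) : EAlg n K β :=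
  ((X.sort (· ≤ ·)).map (gen β)).prod

/-- The χ-boundary `∂e_X = Σ_p (-1)^p χ(X \ i_p) e_{X \ i_p}` (with `X = {i_1 < … < i_m}`,
`p` running from 1 to m). -/
noncomputable def bdry (β : Fin n → Fin n → K) (χ : Finset (Fin n) → K)
    (X : Finset (Fin n)) : EAlg n K β :=
  ((((X.sort (· ≤ ·)).zipIdx.map Prod.swap)).map fun pi =>
    ((-1 : K) ^ (pi.1 + 1) * χ (X.erase pi.2)) • eset β (X.erase pi.2)).sum

end Alg

section Chi

variable {n : ℕ} {K : Type*} [Field K]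

/-- Condition (UC1). -/
def UC1 (M : Matroid (Fin n)) (χ : Finset (Fin n) → K) : Prop :=
  ∀ I : Finset (Fin n), χ I ≠ 0 ↔ M.Indep ↑I

/-- Condition (UC2). -/
def UC2 (β : Fin n → Fin n → K) (M : Matroid (Fin n)) (χ : Finset (Fin n) → K) : Prop :=
  ∀ U U' : Finset (Fin n), Unidep M U → Unidep M U' → U' ⊆ U →
    ∃ ε : K, ε ≠ 0 ∧ bdry β χ U = ε • (bdry β χ U' * eset β (U \ U'))

/-- The (right) ideal `I_χ(M)` of `E`, as a `K`-subspace: it is spanned by the products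
of the boundaries of circuits of size `> 1` (and of the generators indexed by loops)
with arbitrary elements of `E`. -/
noncomputable def chiIdeal (β : Fin n → Fin n → K) (M : Matroid (Fin n))
    (χ : Finset (Fin n) → K) : Submodule K (EAlg n K β) :=
  Submodule.span K
    ({ y | ∃ C : Finset (Fin n), IsCircuit M C ∧ 1 < C.card ∧
        ∃ z : EAlg n K β, y = bdry β χ C * z } ∪
     { y | ∃ i : Fin n, IsCircuit M {i} ∧ ∃ z : EAlg n K β, y = gen β i * z })

/-- The χ-algebra `A_χ(M) = E / I_χ(M)` (as a `K`-vector space). -/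
abbrev AChi (β : Fin n → Fin n → K) (M : Matroid (Fin n)) (χ : Finset (Fin n) → K) :=
  EAlg n K β ⧸ chiIdeal β M χ

/-- The residue class `[e_X]` in `A_χ(M)`. -/
noncomputable def cls (β : Fin n → Fin n → K) (M : Matroid (Fin n))
    (χ : Finset (Fin n) → K) (X : Finset (Fin n)) : AChi β M χ :=
  Submodule.Quotient.mk (eset β X)

/-- The induced map `χ_{M/x}`, `I ↦ χ(I * x)`. -/
def chiC (χ : Finset (Fin n) → K) (x : Fin n) : Finset (Fin n) → K :=
  fun I => ochi χ (I.sort (· ≤ ·) ++ [x])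

/-- Iterated single-element contraction along a list (the head is contracted last). -/
noncomputable def contrList (M : Matroid (Fin n)) : List (Fin n) → Matroid (Fin n)
  | [] => M
  | x :: t => mcon (contrList M t) x

/-- Iterated induced `χ` along a list. -/
def chiL (χ : Finset (Fin n) → K) : List (Fin n) → (Finset (Fin n) → K)
  | [] => χ
  | x :: t => chiC (chiL χ t) x

/-- The iterated residue `p_{I^σ} = p_{i_{σ(1)}} ∘ ⋯ ∘ p_{i_{σ(ℓ)}}` associated to a family
`P` of single-element residue maps and an ordered set (a list). -/
noncomputable def pIter (β : Fin n → Fin n → K)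
    (P : ∀ (M : Matroid (Fin n)) (χ : Finset (Fin n) → K) (x : Fin n),
      AChi β M χ →ₗ[K] AChi β (mcon M x) (chiC χ x))
    (M : Matroid (Fin n)) (χ : Finset (Fin n) → K) :
    (l : List (Fin n)) → (AChi β M χ →ₗ[K] AChi β (contrList M l) (chiL χ l))
  | [] => LinearMap.id
  | x :: t => (P (contrList M t) (chiL χ t) x).comp (pIter β P M χ t)

/-- The defining property of the residue map `p_x` on (classes of) independent sets. -/
def ResFormula (β : Fin n → Fin n → K)
    (P : ∀ (M : Matroid (Fin n)) (χ : Finset (Fin n) → K) (x : Fin n),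
      AChi β M χ →ₗ[K] AChi β (mcon M x) (chiC χ x)) : Prop :=
  ∀ (M : Matroid (Fin n)) (χ : Finset (Fin n) → K) (x : Fin n), ¬ IsLoopM M x →
    ∀ I : Finset (Fin n), M.Indep ↑I →
      (x ∈ I → P M χ x (cls β M χ I) = cls β (mcon M x) (chiC χ x) (I.erase x)) ∧
      (∀ y ∈ I, IsCircuit M {x, y} → P M χ x (cls β M χ I) =
        (ochi χ ((I.erase y).sort (· ≤ ·) ++ [x]) /
          ochi χ ((I.erase y).sort (· ≤ ·) ++ [y])) •
            cls β (mcon M x) (chiC χ x) (I.erase y)) ∧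
      (x ∉ I → (∀ y ∈ I, ¬ IsCircuit M {x, y}) → P M χ x (cls β M χ I) = 0)

end Chi

section Aux

variable {n : ℕ} {K : Type*} [Field K]

local notation "B" => (fun _ _ => (-1 : K) : Fin n → Fin n → K)

lemma gen_sq (i : Fin n) : gen B i * gen B i = 0 := by
  unfold gen
  rw [← map_mul, RingQuot.mkAlgHom_rel K (ERel.sq i), map_zero]

lemma gen_anticomm_lt {i j : Fin n} (h : i < j) :
    gen B j * gen B i = -(gen B i * gen B j) := by
  have h1 : RingQuot.mkAlgHom K (ERel n K B) (FreeAlgebra.ι K j * FreeAlgebra.ι K i)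
      = RingQuot.mkAlgHom K (ERel n K B)
          ((-1 : K) • (FreeAlgebra.ι K i * FreeAlgebra.ι K j)) :=
    RingQuot.mkAlgHom_rel K (ERel.comm h)
  unfold gen
  rw [← map_mul, h1, map_smul (RingQuot.mkAlgHom K (ERel n K B)) (-1 : K), map_mul]
  exact neg_one_smul K _

lemma gen_anticomm {i j : Fin n} (h : i ≠ j) :
    gen B j * gen B i = -(gen B i * gen B j) := by
  rcases lt_or_gt_of_ne h with hlt | hgt
  · exact gen_anticomm_lt hlt
  · rw [gen_anticomm_lt hgt, neg_neg]

/-- Product of generators along a list. -/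
noncomputable def eprod (l : List (Fin n)) : EAlg n K B := (l.map (gen B)).prod

lemma eprod_nil : eprod ([] : List (Fin n)) = (1 : EAlg n K B) := rfl

lemma eprod_cons (x : Fin n) (l : List (Fin n)) :
    eprod (x :: l) = gen B x * eprod l := by simp [eprod]

lemma eprod_append (l₁ l₂ : List (Fin n)) :
    eprod (l₁ ++ l₂) = (eprod l₁ : EAlg n K B) * eprod l₂ := by
  simp [eprod]

lemma eset_eq_eprod (X : Finset (Fin n)) :
    eset B X = eprod (X.sort (· ≤ ·)) := rfl

lemma eprod_orderedInsert (x : Fin n) :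
    ∀ l : List (Fin n), l.Pairwise (· ≤ ·) →
      (eprod (x :: l) : EAlg n K B) =
        ((-1 : K) ^ (l.countP fun b => decide (b < x))) •
          eprod (l.orderedInsert (· ≤ ·) x) := by
  intro l
  induction l with
  | nil => intro _; simp [List.orderedInsert]
  | cons a t ih =>
    intro hs
    by_cases hxa : x ≤ a
    · have hcnt : ((a :: t).countP fun b => decide (b < x)) = 0 := by
        rw [List.countP_eq_zero]
        intro b hb
        have hab : a ≤ b := by
          rcases List.mem_cons.1 hb with rfl | hb
          · exact le_refl _
          · exact (List.pairwise_cons.1 hs).1 b hb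
        simp only [decide_eq_true_eq]
        exact not_lt.2 (hxa.trans hab)
      rw [List.orderedInsert_cons_of_le (h := hxa), hcnt]
      simp
    · have hax : a < x := lt_of_not_ge hxa
      have hne : a ≠ x := ne_of_lt hax
      have hst : t.Pairwise (· ≤ ·) := (List.pairwise_cons.1 hs).2
      have key : eprod (x :: a :: t) = -(gen B a * eprod (x :: t)) := by
        rw [eprod_cons, eprod_cons, ← mul_assoc, gen_anticomm hne, eprod_cons]
        exact (neg_mul (gen B a * gen B x) (eprod t)).trans
          (congrArg Neg.neg (mul_assoc (gen B a) (gen B x) (eprod t)))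
      have hins : (a :: t).orderedInsert (· ≤ ·) x = a :: t.orderedInsert (· ≤ ·) x := by
        simp [List.orderedInsert, hxa]
      have hcnt : ((a :: t).countP fun b => decide (b < x)) =
          (t.countP fun b => decide (b < x)) + 1 := by
        rw [List.countP_cons]
        simp [hax]
      rw [key, ih hst, hins, hcnt, eprod_cons]
      exact (congrArg Neg.neg (mul_smul_comm _ _ _)).trans
        (((congrArg (· • (gen B a * eprod (t.orderedInsert (· ≤ ·) x)))
              (pow_succ (-1 : K) _)).trans (mul_smul _ _ _)).trans
          ((congrArg _ (neg_one_smul K _)).trans (smul_neg _ _))).symm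

lemma eprod_insertionSort :
    ∀ l : List (Fin n),
      (eprod l : EAlg n K B) =
        ((-1 : K) ^ listInv l) • eprod (l.insertionSort (· ≤ ·)) := by
  intro l
  induction l with
  | nil => simp [listInv]
  | cons x t ih =>
    have hsorted : (t.insertionSort (· ≤ ·)).Pairwise (· ≤ ·) :=
      List.pairwise_insertionSort _ t
    have hcnt : ((t.insertionSort (· ≤ ·)).countP fun b => decide (b < x)) =
        (t.countP fun b => decide (b < x)) :=
      (List.perm_insertionSort _ t).countP_eq _
    have e1 : (eprod (x :: t) : EAlg n K B) =
        ((-1 : K) ^ listInv t) • eprod (x :: t.insertionSort (· ≤ ·)) := by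
      rw [eprod_cons x t, ih, eprod_cons]
      exact mul_smul_comm _ _ _
    rw [e1, eprod_orderedInsert x _ hsorted, hcnt]
    show _ = ((-1 : K) ^ ((t.countP fun b => decide (b < x)) + listInv t)) •
      eprod (List.orderedInsert (· ≤ ·) x (t.insertionSort (· ≤ ·)))
    rw [pow_add]
    exact (smul_smul _ _ _).trans (congrArg (· • _) (mul_comm _ _))

lemma eprod_nodup (l : List (Fin n)) (h : l.Nodup) :
    (eprod l : EAlg n K B) = ((-1 : K) ^ listInv l) • eset B l.toFinset := by
  rw [eprod_insertionSort l, eset_eq_eprod]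
  congr 2
  apply List.Perm.eq_of_pairwise' (List.pairwise_insertionSort _ l) (Finset.pairwise_sort _ _)
    ((List.perm_insertionSort _ l).trans
      (List.perm_of_nodup_nodup_toFinset_eq h (Finset.sort_nodup _ _)
        (Finset.sort_toFinset _ _).symm))

lemma listInv_append (l₁ l₂ : List (Fin n)) :
    listInv (l₁ ++ l₂) =
      listInv l₁ + listInv l₂ +
        (l₁.map fun a => l₂.countP fun b => decide (b < a)).sum := by
  induction l₁ with
  | nil => simp [listInv]
  | cons a t ih =>
    show ((t ++ l₂).countP fun b => decide (b < a)) + listInv (t ++ l₂) = _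
    rw [List.countP_append, ih]
    show _ = ((t.countP fun b => decide (b < a)) + listInv t) + _ + _
    simp [List.map_cons]
    ring

lemma listInv_sorted : ∀ l : List (Fin n), l.Pairwise (· ≤ ·) → listInv l = 0 := by
  intro l
  induction l with
  | nil => intro _; rfl
  | cons a t ih =>
    intro hs
    show (t.countP fun b => decide (b < a)) + listInv t = 0
    rw [ih (List.pairwise_cons.1 hs).2, List.countP_eq_zero.2]
    intro b hb
    simp only [decide_eq_true_eq]
    exact not_lt.2 ((List.pairwise_cons.1 hs).1 b hb)

lemma sum_sort {A : Type*} [AddCommMonoid A] (X : Finset (Fin n)) (g : Fin n → A) :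
    ((X.sort (· ≤ ·)).map g).sum = ∑ x ∈ X, g x := by
  rw [Finset.sum, ← Finset.sort_eq X (· ≤ ·)]
  rfl

lemma countP_lt_getElem :
    ∀ (l : List (Fin n)), l.Pairwise (· < ·) → ∀ (i : ℕ) (h : i < l.length),
      l.countP (fun b => decide (b < l[i])) = i := by
  intro l
  induction l with
  | nil => intro _ i h; simp at h
  | cons x t ih =>
    intro hs i h
    have hx := (List.pairwise_cons.1 hs).1
    have hst := (List.pairwise_cons.1 hs).2
    match i with
    | 0 =>
      simp only [List.getElem_cons_zero, List.countP_cons]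
      rw [List.countP_eq_zero.2]
      · simp
      · intro b hb
        simp only [decide_eq_true_eq]
        exact asymm (hx b hb)
    | (j+1) =>
      have hj : j < t.length := by simpa using h
      have hmem : t[j] ∈ t := List.getElem_mem hj
      simp only [List.getElem_cons_succ, List.countP_cons]
      rw [ih hst j hj]
      simp [hx _ hmem]

lemma countP_sort_add (U U' : Finset (Fin n)) (h : U' ⊆ U) (p : Fin n → Bool) :
    (U.sort (· ≤ ·)).countP p =
      (U'.sort (· ≤ ·)).countP p + ((U \ U').sort (· ≤ ·)).countP p := by
  have hnd : (U'.sort (· ≤ ·) ++ (U \ U').sort (· ≤ ·)).Nodup := by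
    rw [List.nodup_append]
    refine ⟨Finset.sort_nodup _ _, Finset.sort_nodup _ _, ?_⟩
    intro a ha b hb
    rw [Finset.mem_sort] at ha hb
    rintro rfl
    exact (Finset.mem_sdiff.1 hb).2 ha
  have hperm : List.Perm (U.sort (· ≤ ·)) (U'.sort (· ≤ ·) ++ (U \ U').sort (· ≤ ·)) :=
    List.perm_of_nodup_nodup_toFinset_eq (Finset.sort_nodup _ _) hnd
      (by rw [Finset.sort_toFinset, List.toFinset_append, Finset.sort_toFinset,
        Finset.sort_toFinset, Finset.union_sdiff_of_subset h])
  rw [hperm.countP_eq p, List.countP_append]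

lemma bdry_eq_sum (χ : Finset (Fin n) → K) (X : Finset (Fin n)) :
    bdry B χ X = ∑ x ∈ X,
      ((-1 : K) ^ (((X.sort (· ≤ ·)).countP fun b => decide (b < x)) + 1) * χ (X.erase x)) •
        eset B (X.erase x) := by
  unfold bdry
  rw [show ((X.sort (· ≤ ·)).zipIdx.map Prod.swap).map
      (fun pi => ((-1 : K) ^ (pi.1 + 1) * χ (X.erase pi.2)) • eset B (X.erase pi.2)) =
      (X.sort (· ≤ ·)).map
      (fun x => ((-1 : K) ^ (((X.sort (· ≤ ·)).countP fun b => decide (b < x)) + 1) *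
        χ (X.erase x)) • eset B (X.erase x)) from ?_, sum_sort]
  apply List.ext_getElem
  · simp
  · intro i h1 h2
    simp only [List.getElem_map, List.getElem_zipIdx, Prod.swap, Nat.zero_add]
    rw [countP_lt_getElem _ (Finset.sortedLT_sort X).pairwise i (by simpa using h2)]

lemma eset_erase_mul (U U' : Finset (Fin n)) (hsub : U' ⊆ U) (x : Fin n) (hxU' : x ∈ U') :
    (eset B (U'.erase x) * eset B (U \ U') : EAlg n K B) =
      ((-1 : K) ^ (∑ a ∈ U'.erase x,
          ((U \ U').sort (· ≤ ·)).countP fun b => decide (b < a))) •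
        eset B (U.erase x) := by
  rw [eset_eq_eprod (U'.erase x), eset_eq_eprod (U \ U'), ← eprod_append]
  have hnd : ((U'.erase x).sort (· ≤ ·) ++ (U \ U').sort (· ≤ ·)).Nodup := by
    rw [List.nodup_append]
    refine ⟨Finset.sort_nodup _ _, Finset.sort_nodup _ _, ?_⟩
    intro a ha b hb
    rw [Finset.mem_sort] at ha hb
    rintro rfl
    exact (Finset.mem_sdiff.1 hb).2 (Finset.mem_of_mem_erase ha)
  rw [eprod_nodup _ hnd]
  have hfin : ((U'.erase x).sort (· ≤ ·) ++ (U \ U').sort (· ≤ ·)).toFinset = U.erase x := by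
    rw [List.toFinset_append, Finset.sort_toFinset, Finset.sort_toFinset]
    ext a
    simp only [Finset.mem_union, Finset.mem_erase, Finset.mem_sdiff]
    constructor
    · rintro (⟨hne, ha⟩ | ⟨ha, hna⟩)
      · exact ⟨hne, hsub ha⟩
      · exact ⟨fun h => hna (h ▸ hxU'), ha⟩
    · rintro ⟨hne, ha⟩
      by_cases hmem : a ∈ U'
      · exact Or.inl ⟨hne, hmem⟩
      · exact Or.inr ⟨ha, hmem⟩
  have hinv : listInv ((U'.erase x).sort (· ≤ ·) ++ (U \ U').sort (· ≤ ·)) =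
      ∑ a ∈ U'.erase x, ((U \ U').sort (· ≤ ·)).countP fun b => decide (b < a) := by
    rw [listInv_append, listInv_sorted _ (Finset.pairwise_sort _ _),
      listInv_sorted _ (Finset.pairwise_sort _ _), sum_sort]
    simp
  rw [hinv, hfin]

lemma negpow_key (c d m : ℕ) :
    ((-1 : K)) ^ (c + d + 1) = (-1 : K) ^ (d + m) * ((-1 : K) ^ (c + 1) * (-1 : K) ^ m) := by
  have h1 : ((-1 : K)) ^ (m + m) = 1 := Even.neg_one_pow ⟨m, rfl⟩
  calc ((-1 : K)) ^ (c + d + 1)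
      = (-1 : K) ^ (c + d + 1) * (-1 : K) ^ (m + m) := by rw [h1, mul_one]
    _ = (-1 : K) ^ ((d + m) + ((c + 1) + m)) := by rw [← pow_add]; congr 1; omega
    _ = (-1 : K) ^ (d + m) * ((-1 : K) ^ (c + 1) * (-1 : K) ^ m) := by
        rw [pow_add, pow_add, pow_add]

lemma exists_circuit_subset (M : Matroid (Fin n)) :
    ∀ X : Finset (Fin n), M.Dep ↑X → ∃ D, D ⊆ X ∧ IsCircuit M D := by
  intro X
  induction X using Finset.strongInductionOn with
  | _ X ih =>
    intro hX
    by_cases h : ∀ D : Finset (Fin n), D ⊂ X → ¬ M.Dep ↑D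
    · exact ⟨X, subset_rfl, hX, h⟩
    · push_neg at h
      obtain ⟨D, hDX, hD⟩ := h
      obtain ⟨C, hCD, hC⟩ := ih D hDX hD
      exact ⟨C, hCD.trans hDX.subset, hC⟩

end Aux


open scoped Classical in
/-- in the Orlik–Solomon (exterior algebra) setting, for unidependents
`U' ⊆ U` one has `∂e_U = ε (∂e_{U'}) e_{U\U'}` with `ε = ±1`. -/
theorem os_UC2 {n : ℕ} {K : Type*} [Field K] (M : Matroid (Fin n))
    (U U' : Finset (Fin n)) (hU : Unidep M U) (hU' : Unidep M U') (hsub : U' ⊆ U) :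
    ∃ ε : K, (ε = 1 ∨ ε = -1) ∧
      bdry (fun _ _ => (-1 : K))
          (fun X => if M.Indep (↑X : Set (Fin n)) then (1 : K) else 0) U =
        ε • (bdry (fun _ _ => (-1 : K))
          (fun X => if M.Indep (↑X : Set (Fin n)) then (1 : K) else 0) U' *
            eset (fun _ _ => (-1 : K)) (U \ U')) := by
  classical
  obtain ⟨hUE, C, ⟨hCU, hCc⟩, huniq⟩ := hU
  obtain ⟨hU'E, C', ⟨hC'U', hC'c⟩, huniq'⟩ := hU'
  have hCC' : C' = C := huniq C' ⟨hC'U'.trans hsub, hC'c⟩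
  have hCU' : C ⊆ U' := hCC' ▸ hC'U'
  have hindU : ∀ x ∈ C, M.Indep (↑(U.erase x) : Set (Fin n)) := by
    intro x hx
    by_contra hni
    have hdep : M.Dep ↑(U.erase x) :=
      ⟨hni, (Finset.coe_subset.2 (Finset.erase_subset x U)).trans hUE⟩
    obtain ⟨D, hDsub, hDc⟩ := exists_circuit_subset M _ hdep
    have hDC : D = C := huniq D ⟨hDsub.trans (Finset.erase_subset x U), hDc⟩
    exact (Finset.notMem_erase x U) (hDsub (hDC ▸ hx))
  have hindU' : ∀ x ∈ C, M.Indep (↑(U'.erase x) : Set (Fin n)) := by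
    intro x hx
    by_contra hni
    have hdep : M.Dep ↑(U'.erase x) :=
      ⟨hni, (Finset.coe_subset.2 (Finset.erase_subset x U')).trans hU'E⟩
    obtain ⟨D, hDsub, hDc⟩ := exists_circuit_subset M _ hdep
    have hDC : D = C := (huniq' D ⟨hDsub.trans (Finset.erase_subset x U'), hDc⟩).trans hCC'
    exact (Finset.notMem_erase x U') (hDsub (hDC ▸ hx))
  have hdepU : ∀ x ∈ U, x ∉ C → ¬ M.Indep (↑(U.erase x) : Set (Fin n)) := by
    intro x _ hxC hi
    exact hCc.1.1 (hi.subset (Finset.coe_subset.2 (Finset.subset_erase.2 ⟨hCU, hxC⟩)))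
  have hdepU' : ∀ x ∈ U', x ∉ C → ¬ M.Indep (↑(U'.erase x) : Set (Fin n)) := by
    intro x _ hxC hi
    exact hCc.1.1 (hi.subset (Finset.coe_subset.2 (Finset.subset_erase.2 ⟨hCU', hxC⟩)))
  refine ⟨(-1 : K) ^ (∑ a ∈ U', ((U \ U').sort (· ≤ ·)).countP fun b => decide (b < a)),
    neg_one_pow_eq_or K _, ?_⟩
  have hL : (∑ x ∈ U,
        ((-1 : K) ^ (((U.sort (· ≤ ·)).countP fun b => decide (b < x)) + 1) *
          (if M.Indep (↑(U.erase x) : Set (Fin n)) then (1 : K) else 0)) •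
          eset (fun _ _ => (-1 : K)) (U.erase x)) =
      ∑ x ∈ C, ((-1 : K) ^ (((U.sort (· ≤ ·)).countP fun b => decide (b < x)) + 1)) •
        eset (fun _ _ => (-1 : K)) (U.erase x) := by
    rw [← Finset.sum_subset hCU (fun x hxU hxC => by
      rw [if_neg (hdepU x hxU hxC), mul_zero]
      exact zero_smul K _)]
    exact Finset.sum_congr rfl fun x hx => by rw [if_pos (hindU x hx), mul_one]
  have hR' : (∑ x ∈ U',
        ((-1 : K) ^ (((U'.sort (· ≤ ·)).countP fun b => decide (b < x)) + 1) *
          (if M.Indep (↑(U'.erase x) : Set (Fin n)) then (1 : K) else 0)) •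
          eset (fun _ _ => (-1 : K)) (U'.erase x)) =
      ∑ x ∈ C, ((-1 : K) ^ (((U'.sort (· ≤ ·)).countP fun b => decide (b < x)) + 1)) •
        eset (fun _ _ => (-1 : K)) (U'.erase x) := by
    rw [← Finset.sum_subset hCU' (fun x hxU hxC => by
      rw [if_neg (hdepU' x hxU hxC), mul_zero]
      exact zero_smul K _)]
    exact Finset.sum_congr rfl fun x hx => by rw [if_pos (hindU' x hx), mul_one]
  have hR : ((-1 : K) ^ (∑ a ∈ U', ((U \ U').sort (· ≤ ·)).countP fun b => decide (b < a))) •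
        ((∑ x ∈ C, ((-1 : K) ^ (((U'.sort (· ≤ ·)).countP fun b => decide (b < x)) + 1)) •
          eset (fun _ _ => (-1 : K)) (U'.erase x)) * eset (fun _ _ => (-1 : K)) (U \ U')) =
      ∑ x ∈ C, ((-1 : K) ^ (((U.sort (· ≤ ·)).countP fun b => decide (b < x)) + 1)) •
        eset (fun _ _ => (-1 : K)) (U.erase x) := by
    rw [Finset.sum_mul, Finset.smul_sum]
    refine Finset.sum_congr rfl fun x hx => ?_
    have hx' : x ∈ U' := hCU' hx
    have e1 : ((U.sort (· ≤ ·)).countP fun b => decide (b < x)) =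
        ((U'.sort (· ≤ ·)).countP fun b => decide (b < x)) +
          ((U \ U').sort (· ≤ ·)).countP fun b => decide (b < x) :=
      countP_sort_add U U' hsub _
    have e2 : (∑ a ∈ U', ((U \ U').sort (· ≤ ·)).countP fun b => decide (b < a)) =
        (((U \ U').sort (· ≤ ·)).countP fun b => decide (b < x)) +
          ∑ a ∈ U'.erase x, ((U \ U').sort (· ≤ ·)).countP fun b => decide (b < a) :=
      (Finset.add_sum_erase U' _ hx').symm
    calc ((-1 : K) ^ (∑ a ∈ U', ((U \ U').sort (· ≤ ·)).countP fun b => decide (b < a))) •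
          ((((-1 : K) ^ (((U'.sort (· ≤ ·)).countP fun b => decide (b < x)) + 1)) •
            eset (fun _ _ => (-1 : K)) (U'.erase x)) * eset (fun _ _ => (-1 : K)) (U \ U'))
        = ((-1 : K) ^ (∑ a ∈ U', ((U \ U').sort (· ≤ ·)).countP fun b => decide (b < a))) •
            (((-1 : K) ^ (((U'.sort (· ≤ ·)).countP fun b => decide (b < x)) + 1)) •
              (eset (fun _ _ => (-1 : K)) (U'.erase x) * eset (fun _ _ => (-1 : K)) (U \ U'))) :=
          congrArg _ (smul_mul_assoc _ _ _)
      _ = ((-1 : K) ^ (∑ a ∈ U', ((U \ U').sort (· ≤ ·)).countP fun b => decide (b < a))) •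
            (((-1 : K) ^ (((U'.sort (· ≤ ·)).countP fun b => decide (b < x)) + 1)) •
              (((-1 : K) ^ (∑ a ∈ U'.erase x,
                  ((U \ U').sort (· ≤ ·)).countP fun b => decide (b < a))) •
                eset (fun _ _ => (-1 : K)) (U.erase x))) := by
          rw [eset_erase_mul U U' hsub x hx']
      _ = (((-1 : K) ^ (∑ a ∈ U', ((U \ U').sort (· ≤ ·)).countP fun b => decide (b < a))) *
            (((-1 : K) ^ (((U'.sort (· ≤ ·)).countP fun b => decide (b < x)) + 1)) *
              ((-1 : K) ^ (∑ a ∈ U'.erase x,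
                ((U \ U').sort (· ≤ ·)).countP fun b => decide (b < a))))) •
            eset (fun _ _ => (-1 : K)) (U.erase x) :=
          (congrArg _ (smul_smul _ _ _)).trans (smul_smul _ _ _)
      _ = ((-1 : K) ^ (((U.sort (· ≤ ·)).countP fun b => decide (b < x)) + 1)) •
            eset (fun _ _ => (-1 : K)) (U.erase x) := by
          rw [e1, e2]
          exact congrArg (· • eset (fun _ _ => (-1 : K)) (U.erase x)) (negpow_key _ _ _).symm
  simp only [bdry_eq_sum]
  rw [hL, hR']
  exact hR.symm
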